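/- Fix an integer N ≥ 3, parameters λ_1, λ_2, … in [0,1], an arbitrary complex 2^N × 2^N matrix ρ_1, and set ρ_k = (id ⊗ Φ_{λ_{k−1}})(ρ_{k−1}) for k ≥ 2 (the map acting on the N-th qubit). Then for every complex 2^{N−1} × 2^{N−1} matrix A and every k ≥ 1: Tr[ρ_k (A ⊗ σ_z)] = (∏_{j=1}^{k−1} (1+√(1−λ_j²))/2) · Tr[ρ_1 (A ⊗ σ_z)] and Tr[ρ_k (A ⊗ σ_x)] = (1/2^{k−1}) · Tr[ρ_1 (A ⊗ σ_x)]. -/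
import Mathlib


open Matrix
open scoped Kronecker

noncomputable section

/-- The Pauli matrix σ_x. -/
def sigx : Matrix (Fin 2) (Fin 2) ℂ := !![0, 1; 1, 0]

/-- The Pauli matrix σ_z. -/
def sigz : Matrix (Fin 2) (Fin 2) ℂ := !![1, 0; 0, -1]

/-- The space of operators on `N` qubits, written as (operators on the first `N−1`
qubits) ⊗ (operators on the `N`-th qubit): complex `2^N × 2^N` matrices indexed by
`(Fin (N-1) → Fin 2) × Fin 2`. -/
abbrev QK (N : ℕ) :=
  Matrix ((Fin (N - 1) → Fin 2) × Fin 2) ((Fin (N - 1) → Fin 2) × Fin 2) ℂ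

/-- The map `id ⊗ Φ_λ`: the single-qubit channel
`Φ_λ(ρ) = ((2+√(1−λ²))/4)ρ + (1/4)σ_z ρ σ_z + ((1−√(1−λ²))/4)σ_x ρ σ_x`
applied to the `N`-th tensor factor and the identity map on the first `N−1` factors. -/
def idPhi (N : ℕ) (lam : ℝ) (ρ : QK N) : QK N :=
  (((2 + Real.sqrt (1 - lam ^ 2)) / 4 : ℝ) : ℂ) • ρ
    + (1/4 : ℂ) • (((1 : Matrix (Fin (N - 1) → Fin 2) (Fin (N - 1) → Fin 2) ℂ) ⊗ₖ sigz) * ρ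
        * ((1 : Matrix (Fin (N - 1) → Fin 2) (Fin (N - 1) → Fin 2) ℂ) ⊗ₖ sigz))
    + (((1 - Real.sqrt (1 - lam ^ 2)) / 4 : ℝ) : ℂ)
        • (((1 : Matrix (Fin (N - 1) → Fin 2) (Fin (N - 1) → Fin 2) ℂ) ⊗ₖ sigx) * ρ
          * ((1 : Matrix (Fin (N - 1) → Fin 2) (Fin (N - 1) → Fin 2) ℂ) ⊗ₖ sigx))

lemma sigz_sq : sigz * sigz = 1 := by
  ext i j; fin_cases i <;> fin_cases j <;>
    simp [sigz, Matrix.mul_apply, Fin.sum_univ_two]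

lemma sigx_sq : sigx * sigx = 1 := by
  ext i j; fin_cases i <;> fin_cases j <;>
    simp [sigx, Matrix.mul_apply, Fin.sum_univ_two]

lemma sigz_sigx_sigz : sigz * sigx * sigz = -sigx := by
  ext i j; fin_cases i <;> fin_cases j <;>
    simp [sigz, sigx, Matrix.mul_apply, Fin.sum_univ_two]

lemma sigx_sigz_sigx : sigx * sigz * sigx = -sigz := by
  ext i j; fin_cases i <;> fin_cases j <;>
    simp [sigz, sigx, Matrix.mul_apply, Fin.sum_univ_two]

lemma sigz_cube : sigz * sigz * sigz = sigz := by rw [sigz_sq, one_mul]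

lemma sigx_cube : sigx * sigx * sigx = sigx := by rw [sigx_sq, one_mul]

lemma traceConjAux {n : Type} [Fintype n] [DecidableEq n] (P ρ M : Matrix n n ℂ) :
    (P * ρ * P * M).trace = (ρ * (P * M * P)).trace := by
  rw [Matrix.trace_mul_cycle, ← mul_assoc, Matrix.trace_mul_cycle, ← mul_assoc,
    Matrix.trace_mul_comm, mul_assoc]

lemma kron_conj {N : ℕ} (A : Matrix (Fin (N - 1) → Fin 2) (Fin (N - 1) → Fin 2) ℂ)
    (σ B : Matrix (Fin 2) (Fin 2) ℂ) :
    ((1 : Matrix (Fin (N - 1) → Fin 2) (Fin (N - 1) → Fin 2) ℂ) ⊗ₖ σ) * (A ⊗ₖ B)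
      * ((1 : Matrix (Fin (N - 1) → Fin 2) (Fin (N - 1) → Fin 2) ℂ) ⊗ₖ σ)
      = A ⊗ₖ (σ * B * σ) := by
  rw [← Matrix.mul_kronecker_mul, ← Matrix.mul_kronecker_mul, one_mul, mul_one]

lemma kron_neg_right {N : ℕ} (A : Matrix (Fin (N - 1) → Fin 2) (Fin (N - 1) → Fin 2) ℂ)
    (B : Matrix (Fin 2) (Fin 2) ℂ) : A ⊗ₖ (-B) = -(A ⊗ₖ B) := by
  ext ⟨i, i'⟩ ⟨j, j'⟩
  simp [Matrix.kroneckerMap_apply]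

lemma step_z {N : ℕ} (lam : ℝ) (ρ : QK N)
    (A : Matrix (Fin (N - 1) → Fin 2) (Fin (N - 1) → Fin 2) ℂ) :
    (idPhi N lam ρ * (A ⊗ₖ sigz)).trace
      = (((1 + Real.sqrt (1 - lam ^ 2)) / 2 : ℝ) : ℂ) * (ρ * (A ⊗ₖ sigz)).trace := by
  unfold idPhi
  rw [add_mul, add_mul, Matrix.smul_mul, Matrix.smul_mul, Matrix.smul_mul,
    Matrix.trace_add, Matrix.trace_add, Matrix.trace_smul, Matrix.trace_smul,
    Matrix.trace_smul, traceConjAux, traceConjAux, kron_conj, kron_conj,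
    sigz_cube, sigx_sigz_sigx, kron_neg_right, mul_neg,
    Matrix.trace_neg]
  simp only [smul_eq_mul, smul_neg]
  push_cast
  ring

lemma step_x {N : ℕ} (lam : ℝ) (ρ : QK N)
    (A : Matrix (Fin (N - 1) → Fin 2) (Fin (N - 1) → Fin 2) ℂ) :
    (idPhi N lam ρ * (A ⊗ₖ sigx)).trace
      = (1 / 2 : ℂ) * (ρ * (A ⊗ₖ sigx)).trace := by
  unfold idPhi
  rw [add_mul, add_mul, Matrix.smul_mul, Matrix.smul_mul, Matrix.smul_mul,
    Matrix.trace_add, Matrix.trace_add, Matrix.trace_smul, Matrix.trace_smul,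
    Matrix.trace_smul, traceConjAux, traceConjAux, kron_conj, kron_conj,
    sigz_sigx_sigz, sigx_cube, kron_neg_right, mul_neg,
    Matrix.trace_neg]
  simp only [smul_eq_mul, smul_neg]
  push_cast
  ring

/-- Fix an integer `N ≥ 3`, parameters `λ_1, λ_2, …` in `[0,1]`, an
arbitrary complex `2^N × 2^N` matrix `ρ_1`, and set `ρ_k = (id ⊗ Φ_{λ_{k−1}})(ρ_{k−1})`
for `k ≥ 2` (the map acting on the `N`-th qubit). Then for every complex
`2^{N−1} × 2^{N−1}` matrix `A` and every `k ≥ 1`: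
`Tr[ρ_k (A ⊗ σ_z)] = (∏_{j=1}^{k−1} (1+√(1−λ_j²))/2) · Tr[ρ_1 (A ⊗ σ_z)]` and
`Tr[ρ_k (A ⊗ σ_x)] = (1/2^{k−1}) · Tr[ρ_1 (A ⊗ σ_x)]`. -/
theorem trace_evolution
    (N : ℕ) (hN : 3 ≤ N)
    (lam : ℕ → ℝ) (hlam : ∀ j, lam j ∈ Set.Icc (0 : ℝ) 1)
    (ρ : ℕ → QK N)
    (hrec : ∀ k, 1 ≤ k → ρ (k + 1) = idPhi N (lam k) (ρ k))
    (A : Matrix (Fin (N - 1) → Fin 2) (Fin (N - 1) → Fin 2) ℂ) :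
    ∀ k, 1 ≤ k →
      (ρ k * (A ⊗ₖ sigz)).trace
        = (∏ j ∈ Finset.Icc 1 (k - 1),
            (((1 + Real.sqrt (1 - lam j ^ 2)) / 2 : ℝ) : ℂ)) * (ρ 1 * (A ⊗ₖ sigz)).trace ∧
      (ρ k * (A ⊗ₖ sigx)).trace
        = (1 / (2 : ℂ) ^ (k - 1)) * (ρ 1 * (A ⊗ₖ sigx)).trace := by
  intro k
  induction k with
  | zero => omega
  | succ n ih =>
    intro _
    rcases Nat.eq_zero_or_pos n with h0 | h1
    · subst h0; simp
    · obtain ⟨hz, hx⟩ := ih h1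
      rw [hrec n h1]
      constructor
      · rw [step_z, hz, Nat.add_sub_cancel,
          show n = (n - 1) + 1 by omega,
          Finset.prod_Icc_succ_top (by omega)]
        rw [show n - 1 + 1 = n by omega]
        ring
      · rw [step_x, hx, Nat.add_sub_cancel,
          show (2 : ℂ) ^ n = 2 ^ (n - 1) * 2 by rw [← pow_succ]; congr 1; omega]
        ring

end
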